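/- Let G be a finite simple graph and let B be a set of triangles of G that is linearly independent in the cycle space of G (no nonempty subset of B sums to the empty cycle). Then there exists a minimum cycle basis of G containing B. -/

import Mathlib

namespace MCBI

variable {V : Type*} [Fintype V] [DecidableEq V]

/-- A *cycle* of a simple graph `G`: a set of edges of `G` such that every vertex of `G`
is incident to an even number of them. -/
def IsCycle (G : SimpleGraph V) (c : Finset (Sym2 V)) : Prop :=
  (↑c : Set (Sym2 V)) ⊆ G.edgeSet ∧ ∀ v : V, Even (c.filter (fun e => v ∈ e)).card

/-- The `⊕`-sum (GF(2)-sum, i.e. iterated symmetric difference) of a finite set of cycles: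
an edge lies in the sum iff it lies in an odd number of the cycles. -/
def cycleSum (D : Finset (Finset (Sym2 V))) : Finset (Sym2 V) :=
  Finset.univ.filter fun e => Odd (D.filter (fun c => e ∈ c)).card

/-- Linear independence over `ℤ/2ℤ`: no nonempty subset sums to the empty cycle. -/
def LinIndep (B : Finset (Finset (Sym2 V))) : Prop :=
  ∀ D ⊆ B, D.Nonempty → cycleSum D ≠ ∅

/-- `B` spans every cycle of `G`. -/
def SpansCycles (G : SimpleGraph V) (B : Finset (Finset (Sym2 V))) : Prop :=
  ∀ c : Finset (Sym2 V), IsCycle G c → ∃ D ⊆ B, cycleSum D = c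

/-- A *cycle basis* of `G`: a linearly independent set of cycles spanning every cycle of `G`. -/
def IsCycleBasis (G : SimpleGraph V) (B : Finset (Finset (Sym2 V))) : Prop :=
  (∀ c ∈ B, IsCycle G c) ∧ LinIndep B ∧ SpansCycles G B

/-- `λ_B(c, d) = 1`: the cycle `c` belongs to a subset of `B` summing to `d`
(the unique such subset when `B` is a basis). -/
def lambdaEq1 (B : Finset (Finset (Sym2 V))) (c d : Finset (Sym2 V)) : Prop :=
  ∃ D ⊆ B, cycleSum D = d ∧ c ∈ D

/-- Total weight of a set of cycles: the sum of the numbers of edges of its cycles. -/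
def weight (B : Finset (Finset (Sym2 V))) : ℕ := ∑ c ∈ B, c.card

/-- A *minimum cycle basis*: a cycle basis of minimum total weight. -/
def IsMCB (G : SimpleGraph V) (B : Finset (Finset (Sym2 V))) : Prop :=
  IsCycleBasis G B ∧
    ∀ B' : Finset (Finset (Sym2 V)), IsCycleBasis G B' → weight B ≤ weight B'

/-- Membership in the `ℤ/2ℤ`-linear span of a set `S` of cycles. -/
def InSpan (S : Set (Finset (Sym2 V))) (c : Finset (Sym2 V)) : Prop :=
  ∃ D : Finset (Finset (Sym2 V)), (↑D : Set (Finset (Sym2 V))) ⊆ S ∧ cycleSum D = c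

/-- The vertices incident to the edges of a cycle. -/
def cycVerts (c : Finset (Sym2 V)) : Finset V :=
  Finset.univ.filter fun v => ∃ e ∈ c, v ∈ e

/-- A finite set of edges forms a connected subgraph: the graph consisting of these edges
together with their endpoints is connected. -/
def EdgesConnected (E : Finset (Sym2 V)) : Prop :=
  ((SimpleGraph.fromEdgeSet (↑E : Set (Sym2 V))).induce {v : V | ∃ e ∈ E, v ∈ e}).Connected

/-- An *elementary cycle*: a nonempty cycle whose edges form a connected subgraph in which
every incident vertex has degree exactly `2`. -/
def IsElementaryCycle (G : SimpleGraph V) (c : Finset (Sym2 V)) : Prop :=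
  IsCycle G c ∧ c.Nonempty ∧
    (∀ v : V, (∃ e ∈ c, v ∈ e) → (c.filter (fun e => v ∈ e)).card = 2) ∧
    EdgesConnected c

/-- The family of independent sets of the matroid `𝓜(G)`: the sets of cycles contained
in some minimum cycle basis of `G`. -/
def matroidIndep (G : SimpleGraph V) : Set (Finset (Finset (Sym2 V))) :=
  {D | ∃ B, IsMCB G B ∧ D ⊆ B}

/-- A set `B` of cycles of the intersection graph `G` is *feasible* for the instance
`G₁, …, G_k` if for every `i` there is a minimum cycle basis of `Gᵢ` containing `B`. -/
def Feasible {k : ℕ} (Gs : Fin k → SimpleGraph V) (G : SimpleGraph V)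
    (B : Finset (Finset (Sym2 V))) : Prop :=
  (∀ c ∈ B, IsCycle G c) ∧ ∀ i : Fin k, ∃ Bi, IsMCB (Gs i) Bi ∧ B ⊆ Bi


/-- indicator sum in ZMod 2 -/
def fD (D : Finset (Finset (Sym2 V))) (e : Sym2 V) : ZMod 2 :=
  ((D.filter (fun c => e ∈ c)).card : ZMod 2)

lemma fD_eq_sum (D : Finset (Finset (Sym2 V))) (e : Sym2 V) :
    fD D e = ∑ c ∈ D, (if e ∈ c then (1 : ZMod 2) else 0) := by
  rw [fD, Finset.card_filter]
  push_cast
  rfl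

lemma zmod2_add_self (a : ZMod 2) : a + a = 0 := by revert a; decide

lemma zmod2_cases (a : ZMod 2) : a = 0 ∨ a = 1 := by revert a; decide

lemma sum_symmDiff_zmod2 {α : Type*} [DecidableEq α] (s t : Finset α) (g : α → ZMod 2) :
    ∑ x ∈ symmDiff s t, g x = (∑ x ∈ s, g x) + ∑ x ∈ t, g x := by
  have h1 : (symmDiff s t) ∪ (s ∩ t) = s ∪ t := symmDiff_sup_inf s t
  have h2 : Disjoint (symmDiff s t) (s ∩ t) := disjoint_symmDiff_inf s t
  have h3 : ∑ x ∈ (symmDiff s t) ∪ (s ∩ t), g x = (∑ x ∈ symmDiff s t, g x) + ∑ x ∈ s ∩ t, g x :=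
    Finset.sum_union h2
  have h4 : (∑ x ∈ s ∪ t, g x) + ∑ x ∈ s ∩ t, g x = (∑ x ∈ s, g x) + ∑ x ∈ t, g x :=
    Finset.sum_union_inter
  rw [h1] at h3
  have hI := zmod2_add_self (∑ x ∈ s ∩ t, g x)
  linear_combination h4 - h3 - hI

lemma fD_symmDiff (D₁ D₂ : Finset (Finset (Sym2 V))) (e : Sym2 V) :
    fD (symmDiff D₁ D₂) e = fD D₁ e + fD D₂ e := by
  simp only [fD_eq_sum]; exact sum_symmDiff_zmod2 _ _ _

lemma mem_cycleSum {D : Finset (Finset (Sym2 V))} {e : Sym2 V} :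
    e ∈ cycleSum D ↔ fD D e = 1 := by
  simp [cycleSum, fD, ZMod.natCast_eq_one_iff_odd]

lemma not_mem_cycleSum {D : Finset (Finset (Sym2 V))} {e : Sym2 V} :
    e ∉ cycleSum D ↔ fD D e = 0 := by
  rw [mem_cycleSum]
  rcases zmod2_cases (fD D e) with h | h <;> simp [h]

lemma cycleSum_eq_iff {D D' : Finset (Finset (Sym2 V))} :
    cycleSum D = cycleSum D' ↔ ∀ e, fD D e = fD D' e := by
  constructor
  · intro h e
    have hm : e ∈ cycleSum D ↔ e ∈ cycleSum D' := by rw [h]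
    rw [mem_cycleSum, mem_cycleSum] at hm
    rcases zmod2_cases (fD D e) with h1 | h1 <;> rcases zmod2_cases (fD D' e) with h2 | h2 <;>
      simp_all
  · intro h
    ext e
    rw [mem_cycleSum, mem_cycleSum, h e]

lemma cycleSum_singleton (c : Finset (Sym2 V)) : cycleSum {c} = c := by
  ext e
  rw [mem_cycleSum, fD_eq_sum, Finset.sum_singleton]
  split <;> simp_all

lemma cycleSum_empty : cycleSum (∅ : Finset (Finset (Sym2 V))) = ∅ := by
  ext e
  rw [mem_cycleSum, fD_eq_sum]
  simp

lemma cycleSum_eq_empty_iff {D : Finset (Finset (Sym2 V))} :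
    cycleSum D = ∅ ↔ ∀ e, fD D e = 0 := by
  rw [show (∅ : Finset (Sym2 V)) = cycleSum ∅ from cycleSum_empty.symm, cycleSum_eq_iff]
  constructor
  · intro h e; rw [h e, fD_eq_sum]; simp
  · intro h e; rw [h e, fD_eq_sum]; simp

lemma fD_insert {D : Finset (Finset (Sym2 V))} {t : Finset (Sym2 V)} (ht : t ∉ D) (e : Sym2 V) :
    fD (insert t D) e = fD D e + (if e ∈ t then 1 else 0) := by
  rw [fD_eq_sum, Finset.sum_insert ht, fD_eq_sum, add_comm]

/-- every nonempty cycle of a simple graph has at least 3 edges -/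
lemma cycle_card_ge_three {G : SimpleGraph V} {c : Finset (Sym2 V)} (hc : IsCycle G c)
    (hne : c.Nonempty) : 3 ≤ c.card := by
  by_contra hlt
  push_neg at hlt
  obtain ⟨e, he⟩ := hne
  obtain ⟨u, v⟩ := e
  have hadj : G.Adj u v := hc.1 he
  have huv : u ≠ v := hadj.ne
  -- filter by u has even card, positive, so ≥ 2
  have key : ∀ w, w ∈ (s(u,v) : Sym2 V) → ∀ x ∈ c, w ∈ x := by
    intro w hw x hx
    have hpos : 0 < (c.filter (fun e => w ∈ e)).card :=
      Finset.card_pos.mpr ⟨s(u,v), Finset.mem_filter.mpr ⟨he, hw⟩⟩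
    have heven := hc.2 w
    have h2 : 2 ≤ (c.filter (fun e => w ∈ e)).card := by
      rcases heven with ⟨k, hk⟩; omega
    have hle : (c.filter (fun e => w ∈ e)).card ≤ c.card := Finset.card_filter_le _ _
    have : (c.filter (fun e => w ∈ e)) = c :=
      Finset.eq_of_subset_of_card_le (Finset.filter_subset _ _) (by omega)
    rw [← this] at hx
    exact (Finset.mem_filter.mp hx).2
  -- c has card 2, get e' ≠ e
  have hcard2 : 2 ≤ c.card := by
    have hpos : 0 < (c.filter (fun e => u ∈ e)).card :=
      Finset.card_pos.mpr ⟨s(u,v), Finset.mem_filter.mpr ⟨he, by simp⟩⟩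
    have heven := hc.2 u
    have h2 : 2 ≤ (c.filter (fun e => u ∈ e)).card := by
      rcases heven with ⟨k, hk⟩; omega
    exact le_trans h2 (Finset.card_filter_le _ _)
  obtain ⟨e', he', hee'⟩ := Finset.exists_mem_ne (s := c) (by omega) s(u,v)
  have hu : u ∈ e' := key u (by simp) e' he'
  have hv : v ∈ e' := key v (by simp) e' he'
  exact hee' ((Sym2.mem_and_mem_iff huv).mp ⟨hu, hv⟩)

lemma zmod2_eq_of_add_eq_zero {a b : ZMod 2} (h : a + b = 0) : a = b := by
  revert a b; decide

lemma fD_eq_indicator_of_cycleSum_eq {D : Finset (Finset (Sym2 V))} {t : Finset (Sym2 V)}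
    (h : cycleSum D = t) (e : Sym2 V) : fD D e = (if e ∈ t then 1 else 0) := by
  have h2 : cycleSum D = cycleSum {t} := by rw [cycleSum_singleton]; exact h
  have := cycleSum_eq_iff.mp h2 e
  rw [this, fD_eq_sum, Finset.sum_singleton]

lemma linIndep_empty : LinIndep (∅ : Finset (Finset (Sym2 V))) := by
  intro D hD hne _
  exact hne.ne_empty (Finset.subset_empty.mp hD)

lemma exists_cycleBasis (G : SimpleGraph V) : ∃ B, IsCycleBasis G B := by
  classical
  set C : Finset (Finset (Sym2 V)) := Finset.univ.filter (fun c => IsCycle G c) with hC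
  have hCmem : ∀ c, c ∈ C ↔ IsCycle G c := by intro c; simp [hC]
  set S : Finset (Finset (Finset (Sym2 V))) := C.powerset.filter LinIndep with hS
  have hSne : S.Nonempty :=
    ⟨∅, Finset.mem_filter.mpr ⟨Finset.mem_powerset.mpr (Finset.empty_subset _), linIndep_empty⟩⟩
  obtain ⟨B, hBS, hBmax⟩ := S.exists_max_image Finset.card hSne
  rw [hS, Finset.mem_filter, Finset.mem_powerset] at hBS
  obtain ⟨hBC, hBind⟩ := hBS
  refine ⟨B, fun c hc => (hCmem c).mp (hBC hc), hBind, ?_⟩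
  intro c hc
  by_contra hns
  push_neg at hns
  have hcB : c ∉ B := fun h => hns {c} (Finset.singleton_subset_iff.mpr h) (cycleSum_singleton c)
  have hind' : LinIndep (insert c B) := by
    intro D hD hne heq
    by_cases hcD : c ∈ D
    · set E := D.erase c with hE
      have hEB : E ⊆ B := fun x hx => by
        have := hD (Finset.mem_of_mem_erase hx)
        rcases Finset.mem_insert.mp this with h | h
        · exact absurd h (Finset.mem_erase.mp hx).1
        · exact h
      have hcE : c ∉ E := Finset.notMem_erase c D
      have hDE : D = insert c E := by rw [hE, Finset.insert_erase hcD]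
      have hfE : ∀ e, fD E e = (if e ∈ c then 1 else 0) := by
        intro e
        have h0 : fD D e = 0 := cycleSum_eq_empty_iff.mp heq e
        rw [hDE, fD_insert hcE] at h0
        rw [add_comm] at h0
        exact (zmod2_eq_of_add_eq_zero h0).symm ▸ rfl
      have : cycleSum E = c := by
        have : cycleSum E = cycleSum {c} := cycleSum_eq_iff.mpr (by
          intro e; rw [hfE e, fD_eq_sum, Finset.sum_singleton])
        rw [this, cycleSum_singleton]
      exact hns E hEB this
    · exact hBind D (fun x hx => (Finset.mem_insert.mp (hD hx)).resolve_left
        (fun h => hcD (h ▸ hx))) hne heq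
  have hmem : insert c B ∈ S := Finset.mem_filter.mpr
    ⟨Finset.mem_powerset.mpr (Finset.insert_subset ((hCmem c).mpr hc) hBC), hind'⟩
  have := hBmax _ hmem
  rw [Finset.card_insert_of_notMem hcB] at this
  omega

lemma exists_MCB (G : SimpleGraph V) : ∃ B, IsMCB G B := by
  classical
  obtain ⟨B0, hB0⟩ := exists_cycleBasis G
  set C : Finset (Finset (Sym2 V)) := Finset.univ.filter (fun c => IsCycle G c) with hC
  have hCsub : ∀ B', IsCycleBasis G B' → B' ∈ C.powerset := by
    intro B' hB'
    exact Finset.mem_powerset.mpr (fun c hc => by simp [hC, hB'.1 c hc])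
  set S : Finset (Finset (Finset (Sym2 V))) := C.powerset.filter (IsCycleBasis G) with hS
  have hSne : S.Nonempty := ⟨B0, Finset.mem_filter.mpr ⟨hCsub B0 hB0, hB0⟩⟩
  obtain ⟨B, hBS, hmin⟩ := S.exists_min_image weight hSne
  exact ⟨B, (Finset.mem_filter.mp hBS).2,
    fun B' hB' => hmin B' (Finset.mem_filter.mpr ⟨hCsub B' hB', hB'⟩)⟩

lemma mcb_nonempty_cycles {M : Finset (Finset (Sym2 V))}
    (hM : LinIndep M) {c : Finset (Sym2 V)} (hc : c ∈ M) : c.Nonempty := by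
  rw [Finset.nonempty_iff_ne_empty]
  intro h
  exact hM {c} (Finset.singleton_subset_iff.mpr hc) ⟨c, Finset.mem_singleton_self c⟩
    (by rw [cycleSum_singleton, h])

/-- Every linearly independent set of triangles of `G` extends to a
minimum cycle basis of `G`. -/
theorem indep_triangles_extend_to_mcb (G : SimpleGraph V) (B : Finset (Finset (Sym2 V)))
    (hB : ∀ c ∈ B, IsCycle G c ∧ c.card = 3) (hind : LinIndep B) :
    ∃ B' : Finset (Finset (Sym2 V)), IsMCB G B' ∧ B ⊆ B' := by
  classical
  obtain ⟨M0, hM0⟩ := exists_MCB G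
  suffices H : ∀ n (M : Finset (Finset (Sym2 V))), IsMCB G M → (B \ M).card ≤ n →
      ∃ B', IsMCB G B' ∧ B ⊆ B' by
    exact H (B \ M0).card M0 hM0 le_rfl
  intro n
  induction n with
  | zero =>
    intro M hM h0
    have : B \ M = ∅ := Finset.card_eq_zero.mp (Nat.le_zero.mp h0)
    exact ⟨M, hM, Finset.sdiff_eq_empty_iff_subset.mp this⟩
  | succ n ih =>
    intro M hM hcard
    by_cases hBM : B ⊆ M
    · exact ⟨M, hM, hBM⟩
    obtain ⟨t, ht⟩ : (B \ M).Nonempty := by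
      rw [Finset.sdiff_nonempty]; exact hBM
    rw [Finset.mem_sdiff] at ht
    obtain ⟨htB, htM⟩ := ht
    have htcyc : IsCycle G t := (hB t htB).1
    have htcard : t.card = 3 := (hB t htB).2
    obtain ⟨D, hDM, hDt⟩ := hM.1.2.2 t htcyc
    have htD : t ∉ D := fun h => htM (hDM h)
    have hfDt : ∀ e, fD D e = (if e ∈ t then 1 else 0) :=
      fD_eq_indicator_of_cycleSum_eq hDt
    -- find c in D not in B
    have hexc : ∃ c ∈ D, c ∉ B := by
      by_contra h
      push_neg at h
      have hsub : insert t D ⊆ B := Finset.insert_subset htB (fun c hc => h c hc)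
      have hzero : cycleSum (insert t D) = ∅ := by
        rw [cycleSum_eq_empty_iff]
        intro e
        rw [fD_insert htD e, hfDt e, zmod2_add_self]
      exact hind (insert t D) hsub ⟨t, Finset.mem_insert_self _ _⟩ hzero
    obtain ⟨c, hcD, hcB⟩ := hexc
    have hcM : c ∈ M := hDM hcD
    have hct : c ≠ t := fun h => htM (h ▸ hcM)
    set M' : Finset (Finset (Sym2 V)) := insert t (M.erase c) with hM'def
    have htMe : t ∉ M.erase c := fun h => htM (Finset.mem_of_mem_erase h)
    have hMesub : M.erase c ⊆ M := Finset.erase_subset c M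
    -- all elements of M' are cycles
    have hcyc' : ∀ x ∈ M', IsCycle G x := by
      intro x hx
      rcases Finset.mem_insert.mp hx with h | h
      · exact h ▸ htcyc
      · exact hM.1.1 x (hMesub h)
    -- linear independence of M'
    have hind' : LinIndep M' := by
      intro D' hD' hne' heq'
      by_cases htD' : t ∈ D'
      · set E := D'.erase t with hE
        have hEMe : E ⊆ M.erase c := fun x hx => by
          have hxD' := Finset.mem_of_mem_erase hx
          have hxt := (Finset.mem_erase.mp hx).1
          exact (Finset.mem_insert.mp (hD' hxD')).resolve_left hxt
        have hcE : c ∉ E := fun h => (Finset.mem_erase.mp (hEMe h)).1 rfl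
        have htE : t ∉ E := Finset.notMem_erase t D'
        have hD'E : D' = insert t E := by rw [hE, Finset.insert_erase htD']
        have hfE : ∀ e, fD E e = fD D e := by
          intro e
          have h0 : fD D' e = 0 := cycleSum_eq_empty_iff.mp heq' e
          rw [hD'E, fD_insert htE e] at h0
          rw [zmod2_eq_of_add_eq_zero h0, hfDt e]
        have hFM : symmDiff E D ⊆ M := fun x hx => by
          rcases Finset.mem_symmDiff.mp hx with ⟨h1, _⟩ | ⟨h1, _⟩
          · exact hMesub (hEMe h1)
          · exact hDM h1
        have hcF : c ∈ symmDiff E D := Finset.mem_symmDiff.mpr (Or.inr ⟨hcD, hcE⟩)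
        have hzero : cycleSum (symmDiff E D) = ∅ := by
          rw [cycleSum_eq_empty_iff]
          intro e
          rw [fD_symmDiff, hfE e, zmod2_add_self]
        exact hM.1.2.1 (symmDiff E D) hFM ⟨c, hcF⟩ hzero
      · have : D' ⊆ M :=
          fun x hx => hMesub ((Finset.mem_insert.mp (hD' hx)).resolve_left
            (fun h => htD' (h ▸ hx)))
        exact hM.1.2.1 D' this hne' heq'
    -- spanning
    have hspan' : SpansCycles G M' := by
      intro x hx
      obtain ⟨E, hEM, hEx⟩ := hM.1.2.2 x hx
      by_cases hcE : c ∈ E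
      · set F := symmDiff E (insert t D) with hF
        have hFsub : F ⊆ M' := by
          intro y hy
          rcases Finset.mem_symmDiff.mp hy with ⟨h1, h2⟩ | ⟨h1, h2⟩
          · have hyc : y ≠ c := fun h => h2 (Finset.mem_insert_of_mem (h ▸ hcD))
            exact Finset.mem_insert_of_mem (Finset.mem_erase.mpr ⟨hyc, hEM h1⟩)
          · rcases Finset.mem_insert.mp h1 with h | h
            · exact h ▸ Finset.mem_insert_self _ _
            · have hyc : y ≠ c := fun hh => h2 (hh ▸ hcE)
              exact Finset.mem_insert_of_mem (Finset.mem_erase.mpr ⟨hyc, hDM h⟩)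
        refine ⟨F, hFsub, ?_⟩
        have : cycleSum F = cycleSum E := by
          rw [cycleSum_eq_iff]
          intro e
          rw [hF, fD_symmDiff, fD_insert htD e, hfDt e, zmod2_add_self, add_zero]
        rw [this, hEx]
      · refine ⟨E, ?_, hEx⟩
        intro y hy
        have hyc : y ≠ c := fun h => hcE (h ▸ hy)
        exact Finset.mem_insert_of_mem (Finset.mem_erase.mpr ⟨hyc, hEM hy⟩)
    -- weight
    have hc3 : 3 ≤ c.card :=
      cycle_card_ge_three (hM.1.1 c hcM) (mcb_nonempty_cycles hM.1.2.1 hcM)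
    have hw1 : weight M' = t.card + weight (M.erase c) := Finset.sum_insert htMe
    have hw2 : weight (M.erase c) + c.card = weight M :=
      Finset.sum_erase_add M _ hcM
    have hw : weight M' ≤ weight M := by omega
    have hmcb : IsMCB G M' := ⟨⟨hcyc', hind', hspan'⟩,
      fun B' hB' => le_trans hw (hM.2 B' hB')⟩
    apply ih M' hmcb
    have hsub2 : B \ M' ⊆ (B \ M).erase t := by
      intro x hx
      rw [Finset.mem_sdiff] at hx
      have hxt : x ≠ t := fun h => hx.2 (h ▸ Finset.mem_insert_self _ _)
      have hxc : x ≠ c := fun h => hcB (h ▸ hx.1)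
      refine Finset.mem_erase.mpr ⟨hxt, Finset.mem_sdiff.mpr ⟨hx.1, fun hxM => hx.2 ?_⟩⟩
      exact Finset.mem_insert_of_mem (Finset.mem_erase.mpr ⟨hxc, hxM⟩)
    have h1 : (B \ M').card ≤ ((B \ M).erase t).card := Finset.card_le_card hsub2
    have h2 : ((B \ M).erase t).card = (B \ M).card - 1 :=
      Finset.card_erase_of_mem (Finset.mem_sdiff.mpr ⟨htB, htM⟩)
    have h3 : 1 ≤ (B \ M).card :=
      Finset.card_pos.mpr ⟨t, Finset.mem_sdiff.mpr ⟨htB, htM⟩⟩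
    omega
end MCBI
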